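/- arXiv:2208.12773 — 4 statements merged into one kernel-verified Lean document; each statement's English description precedes it below -/
import Mathlib

section
/- Let Δ_{w,a} be the Laplacian of a finite directed graph with strictly positive weights w and drift a, t > 0, T_t = e^{−tΔ_{w,a}/2}, and S_t = (I − e^{−tΔ_{w,a}})^{1/2}. Then for every f ∈ ℓ²(V), ‖S_t |f|‖ ≤ ‖S_t f‖, where |f|(i) = |f(i)|. -/
open Matrix Real MeasureTheory ProbabilityTheory

variable {V : Type*} [Fintype V] [DecidableEq V]

/-- The difference operator `(D_a f)(i,j) = f j - e^{a(i,j)} f i`, as a matrix from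
`ℓ²(V)` to `ℓ²(E)`. -/
noncomputable def Dmat (E : Finset (V × V)) (a : V × V → ℝ) : Matrix E V ℝ :=
  fun e v => (if v = (e : V × V).2 then (1 : ℝ) else 0) -
    Real.exp (a e) * (if v = (e : V × V).1 then (1 : ℝ) else 0)

/-- The Laplacian `Δ_{w,a} = D_a^* M_w D_a` associated with the quadratic form
`Q_{w,a}(f) = Σ_{(i,j)∈E} w(i,j) |e^{a(i,j)} f i − f j|²`. -/
noncomputable def Lap (E : Finset (V × V)) (w a : V × V → ℝ) : Matrix V V ℝ :=
  (Dmat E a)ᵀ * Matrix.diagonal (fun e : E => w e) * Dmat E a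

/-- Weak connectivity of a directed graph: any two vertices are joined by a chain of
edges ignoring orientation. -/
def WeaklyConnected (E : Finset (V × V)) : Prop :=
  ∀ u v : V, Relation.ReflTransGen (fun x y => (x, y) ∈ E ∨ (y, x) ∈ E) u v

section Aux

attribute [local instance] Matrix.linftyOpNormedRing Matrix.linftyOpNormedAlgebra

/-- Powers of an entrywise nonnegative matrix are entrywise nonnegative. -/
lemma pow_entry_nonneg (B : Matrix V V ℝ) (hB : ∀ i j, 0 ≤ B i j) (n : ℕ) :
    ∀ i j, 0 ≤ (B ^ n) i j := by
  induction n with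
  | zero =>
    intro i j
    simp only [pow_zero, Matrix.one_apply]
    split <;> norm_num
  | succ n ih =>
    intro i j
    rw [pow_succ, Matrix.mul_apply]
    exact Finset.sum_nonneg fun k _ => mul_nonneg (ih i k) (hB k j)

/-- The exponential of an entrywise nonnegative matrix is entrywise nonnegative. -/
lemma exp_entry_nonneg (B : Matrix V V ℝ) (hB : ∀ i j, 0 ≤ B i j) (i j : V) :
    0 ≤ NormedSpace.exp B i j := by
  have hsum : Summable (fun n : ℕ => ((n.factorial : ℝ)⁻¹ • B ^ n)) :=
    NormedSpace.expSeries_summable' (𝕂 := ℝ) B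
  have h1 : NormedSpace.exp B = ∑' n : ℕ, ((n.factorial : ℝ)⁻¹ • B ^ n) := by
    rw [NormedSpace.exp_eq_tsum ℝ]
  have h2 : NormedSpace.exp B i j
      = ∑' n : ℕ, ((n.factorial : ℝ)⁻¹ • B ^ n) i j := by
    rw [h1]
    exact (congrFun (tsum_apply (f := fun n : ℕ => ((n.factorial : ℝ)⁻¹ • B ^ n : V → V → ℝ))
      (x := i) hsum) j).trans (tsum_apply (x := j) (Pi.summable.mp hsum i))
  rw [h2]
  refine tsum_nonneg fun n => ?_
  have : ((n.factorial : ℝ)⁻¹ • B ^ n) i j = (n.factorial : ℝ)⁻¹ * (B ^ n) i j := rfl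
  rw [this]
  exact mul_nonneg (by positivity) (pow_entry_nonneg B hB n i j)

end Aux

set_option linter.unusedSectionVars false in
/-- Off-diagonal entries of the Laplacian are nonpositive. -/
lemma lap_offdiag_nonpos (E : Finset (V × V)) (w a : V × V → ℝ)
    (hw : ∀ e ∈ E, 0 < w e) {i j : V} (hij : i ≠ j) :
    Lap E w a i j ≤ 0 := by
  have h : Lap E w a i j = ∑ e : E, Dmat E a e i * (w e * Dmat E a e j) := by
    rw [Lap, Matrix.mul_assoc, Matrix.mul_apply]
    refine Finset.sum_congr rfl fun e _ => ?_
    rw [Matrix.diagonal_mul, Matrix.transpose_apply]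
  rw [h]
  refine Finset.sum_nonpos fun e _ => ?_
  have hwe : 0 < w e := hw e e.2
  have : Dmat E a e i * Dmat E a e j ≤ 0 := by
    simp only [Dmat]
    by_cases h2 : i = (e : V × V).2
    · have hj2 : j ≠ (e : V × V).2 := fun h => hij (h2.trans h.symm)
      by_cases hj1 : j = (e : V × V).1
      · have hi1 : i ≠ (e : V × V).1 := fun h => hij (h.trans hj1.symm)
        simp only [if_pos h2, if_neg hi1, if_neg hj2, if_pos hj1]
        have := Real.exp_pos (a e)
        nlinarith
      · simp [if_neg hj2, if_neg hj1]
    · by_cases hi1 : i = (e : V × V).1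
      · have hj1 : j ≠ (e : V × V).1 := fun h => hij (hi1.trans h.symm)
        simp only [if_neg h2, if_pos hi1, if_neg hj1]
        by_cases hj2 : j = (e : V × V).2
        · simp only [if_pos hj2]
          have := Real.exp_pos (a e)
          nlinarith
        · simp [if_neg hj2]
      · simp [if_neg h2, if_neg hi1]
  calc Dmat E a e i * (w e * Dmat E a e j)
      = w e * (Dmat E a e i * Dmat E a e j) := by ring
    _ ≤ 0 := mul_nonpos_of_nonneg_of_nonpos hwe.le this

/-- Beurling–Deny type inequality `‖S_t |f|‖ ≤ ‖S_t f‖` for the high-pass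
filter `S_t = (I - e^{-tΔ_{w,a}})^{1/2}`. -/
theorem stmt_6 (E : Finset (V × V)) (w a : V × V → ℝ)
    (hw : ∀ e ∈ E, 0 < w e) (t : ℝ) (ht : 0 < t)
    (S : Matrix V V ℝ) (hS : S.PosSemidef)
    (hSsq : S * S = 1 - NormedSpace.exp ((-t) • Lap E w a)) (f : V → ℝ) :
    ∑ i, (S.mulVec (fun j => |f j|) i) ^ 2 ≤ ∑ i, (S.mulVec f i) ^ 2 := by
  set A : Matrix V V ℝ := (-t) • Lap E w a with hA
  -- off-diagonal entries of A are nonnegative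
  have hAoff : ∀ i j : V, i ≠ j → 0 ≤ A i j := by
    intro i j hij
    have : A i j = -t * Lap E w a i j := rfl
    rw [this]
    have hl := lap_offdiag_nonpos E w a hw hij
    nlinarith
  -- shift by a large multiple of the identity to get entrywise nonnegativity
  set c : ℝ := ∑ i, |A i i| with hc
  set B : Matrix V V ℝ := A + c • (1 : Matrix V V ℝ) with hB
  have hBnn : ∀ i j, 0 ≤ B i j := by
    intro i j
    by_cases hij : i = j
    · subst hij
      have h1 : B i i = A i i + c := by
        simp [hB, Matrix.smul_apply, Matrix.one_apply]
      have h2 : |A i i| ≤ c := Finset.single_le_sum (f := fun k => |A k k|)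
        (fun k _ => abs_nonneg _) (Finset.mem_univ i)
      rw [h1]
      cases abs_cases (A i i) with
      | inl h => linarith [h.2, abs_nonneg (A i i)]
      | inr h => linarith [h.1]
    · have h1 : B i j = A i j := by
        simp [hB, Matrix.smul_apply, Matrix.one_apply, hij]
      rw [h1]
      exact hAoff i j hij
  -- exp A = exp(-c) • exp B, hence entrywise nonnegative
  have hexpA : ∀ i j, 0 ≤ NormedSpace.exp A i j := by
    have hAB : A = B + (-c) • (1 : Matrix V V ℝ) := by
      rw [hB]; abel_nf; simp [neg_smul]
    have hcomm : Commute B ((-c) • (1 : Matrix V V ℝ)) :=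
      (Commute.one_right B).smul_right (-c)
    have hsplit : NormedSpace.exp A
        = NormedSpace.exp B * NormedSpace.exp ((-c) • (1 : Matrix V V ℝ)) := by
      rw [hAB]
      exact Matrix.exp_add_of_commute B _ hcomm
    have hsc : NormedSpace.exp ((-c) • (1 : Matrix V V ℝ))
        = Matrix.diagonal (fun _ : V => Real.exp (-c)) := by
      have hp : NormedSpace.exp (fun _ : V => (-c)) = fun _ : V => Real.exp (-c) := by
        funext k
        rw [Pi.coe_exp, Real.exp_eq_exp_ℝ]
      rw [Matrix.smul_one_eq_diagonal, Matrix.exp_diagonal, hp]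
    intro i j
    rw [hsplit, hsc, Matrix.mul_diagonal]
    exact mul_nonneg (exp_entry_nonneg B hBnn i j) (Real.exp_pos _).le
  -- reduce the claim to a quadratic form computation
  have hSt : Sᵀ = S := by
    have := hS.1
    rwa [Matrix.IsHermitian, Matrix.conjTranspose_eq_transpose_of_trivial] at this
  have key : ∀ g : V → ℝ, ∑ i, (S.mulVec g i) ^ 2
      = (∑ i, g i * g i) - g ⬝ᵥ (NormedSpace.exp A).mulVec g := by
    intro g
    have h1 : ∑ i, (S.mulVec g i) ^ 2 = (S.mulVec g) ⬝ᵥ (S.mulVec g) := by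
      simp [dotProduct, sq]
    have h2 : (S.mulVec g) ⬝ᵥ (S.mulVec g) = g ⬝ᵥ ((S * S).mulVec g) := by
      conv_lhs => rw [← hSt]
      rw [← Matrix.mulVec_mulVec, dotProduct_mulVec, Matrix.vecMul_transpose, hSt,
        dotProduct_comm]
    rw [h1, h2, hSsq, Matrix.sub_mulVec, dotProduct_sub, Matrix.one_mulVec]
    simp [dotProduct]
  rw [key, key]
  have habs : ∑ i, |f i| * |f i| = ∑ i, f i * f i := by
    refine Finset.sum_congr rfl fun i _ => ?_
    rw [← abs_mul, abs_mul_self]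
  rw [habs]
  have hcross : f ⬝ᵥ (NormedSpace.exp A).mulVec f
      ≤ (fun j => |f j|) ⬝ᵥ (NormedSpace.exp A).mulVec (fun j => |f j|) := by
    simp only [dotProduct, Matrix.mulVec, Finset.mul_sum]
    refine Finset.sum_le_sum fun i _ => Finset.sum_le_sum fun j _ => ?_
    have h1 : f i * (NormedSpace.exp A i j * f j)
        ≤ |f i * (NormedSpace.exp A i j * f j)| := le_abs_self _
    calc f i * (NormedSpace.exp A i j * f j)
        ≤ |f i * (NormedSpace.exp A i j * f j)| := h1
      _ = |f i| * (|NormedSpace.exp A i j| * |f j|) := by rw [abs_mul, abs_mul]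
      _ = |f i| * (NormedSpace.exp A i j * |f j|) := by
          rw [abs_of_nonneg (hexpA i j)]
  linarith
end

section
/- Let (V,E) be a finite weakly connected directed graph, Δ_{w,a} the associated Laplacian with largest eigenvalue λ_max, t > 0, T_t = e^{−tΔ_{w,a}/2}, S_t = (I − e^{−tΔ_{w,a}})^{1/2}. Given f ∈ ℓ²(V), define the scattering sequence g_0 = f and g_{k+1} = S_t |g_k| for k ≥ 0. Then for every k ∈ ℕ, k ≥ 1: ‖g_k‖ ≤ (1 − e^{−t λ_max})^{(k−1)/2} ‖S_t |g_0|‖ ≤ (1 − e^{−t λ_max})^{k/2} ‖f‖. -/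
open Matrix Real MeasureTheory ProbabilityTheory

variable {V : Type*} [Fintype V] [DecidableEq V]

lemma Lap_isHermitian (E : Finset (V × V)) (w a : V × V → ℝ) :
    (Lap E w a).IsHermitian := by
  unfold Matrix.IsHermitian
  rw [Matrix.conjTranspose_eq_transpose_of_trivial]
  unfold Lap
  rw [Matrix.transpose_mul, Matrix.transpose_mul, Matrix.transpose_transpose,
    Matrix.diagonal_transpose, Matrix.mul_assoc]

lemma Lap_posSemidef (E : Finset (V × V)) (w a : V × V → ℝ)
    (hw : ∀ e ∈ E, 0 < w e) : (Lap E w a).PosSemidef := by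
  have hd : (Matrix.diagonal (fun e : E => w e)).PosSemidef :=
    Matrix.PosSemidef.diagonal (fun e => (hw e e.2).le)
  have := hd.conjTranspose_mul_mul_same (Dmat E a)
  rwa [Matrix.conjTranspose_eq_transpose_of_trivial] at this

/-- Key quadratic form bound: `‖S x‖² ≤ (1 - e^{-t λmax}) ‖x‖²`. -/
lemma key_bound (E : Finset (V × V)) (w a : V × V → ℝ)
    (hw : ∀ e ∈ E, 0 < w e)
    (t : ℝ) (ht : 0 < t) (lmax : ℝ)
    (hlmax : IsGreatest {μ : ℝ | ∃ f : V → ℝ, f ≠ 0 ∧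
      (Lap E w a).mulVec f = μ • f} lmax)
    (S : Matrix V V ℝ) (hS : S.PosSemidef)
    (hSsq : S * S = 1 - NormedSpace.exp ((-t) • Lap E w a)) (x : V → ℝ) :
    ∑ i, (S.mulVec x i) ^ 2 ≤ (1 - Real.exp (-(t * lmax))) * ∑ i, (x i) ^ 2 := by
  classical
  set L := Lap E w a with hLdef
  have hL : L.IsHermitian := Lap_isHermitian E w a
  set U : Matrix V V ℝ := (hL.eigenvectorUnitary : Matrix V V ℝ) with hUdef
  set μ : V → ℝ := hL.eigenvalues with hμdef
  have hU1 : U * star U = 1 := (Matrix.mem_unitaryGroup_iff).mp hL.eigenvectorUnitary.2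
  have hU2 : star U * U = 1 := (Matrix.mem_unitaryGroup_iff').mp hL.eigenvectorUnitary.2
  have hUinv : U⁻¹ = star U := Matrix.inv_eq_left_inv hU2
  have hUunit : IsUnit U := ⟨⟨U, star U, hU1, hU2⟩, rfl⟩
  -- eigenvalues are at most lmax
  have hev : ∀ i, μ i ≤ lmax := by
    intro i
    apply hlmax.2
    refine ⟨⇑(hL.eigenvectorBasis i), ?_, hL.mulVec_eigenvectorBasis i⟩
    intro h
    apply hL.eigenvectorBasis.orthonormal.ne_zero i
    ext j
    exact congrFun h j
  -- spectral theorem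
  have hspec : L = U * Matrix.diagonal μ * star U := by
    have := hL.spectral_theorem
    simpa [RCLike.ofReal_real_eq_id] using this
  have hdd : Matrix.diagonal (fun i => -t * μ i) = (-t) • Matrix.diagonal μ := by
    ext i j
    by_cases h : i = j <;> simp [Matrix.diagonal, h]
  have hdiag : (-t) • L = U * Matrix.diagonal (fun i => -t * μ i) * U⁻¹ := by
    rw [hUinv, hspec, hdd, Matrix.mul_smul, Matrix.smul_mul]
  have hexp : NormedSpace.exp ((-t) • L)
      = U * Matrix.diagonal (fun i => Real.exp (-t * μ i)) * star U := by
    rw [hdiag, Matrix.exp_conj U _ hUunit, Matrix.exp_diagonal, hUinv]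
    congr 2
    ext i
    rw [Pi.exp_def, ← Real.exp_eq_exp_ℝ]
  -- PSD of exp(-tL) - e^{-t lmax} • 1
  have hone : Real.exp (-(t * lmax)) • (1 : Matrix V V ℝ)
      = U * Matrix.diagonal (fun _ : V => Real.exp (-(t * lmax))) * star U := by
    have h1 : Matrix.diagonal (fun _ : V => Real.exp (-(t * lmax)))
        = Real.exp (-(t * lmax)) • (1 : Matrix V V ℝ) := by
      ext i j
      by_cases h : i = j <;> simp [Matrix.diagonal, Matrix.one_apply, h]
    rw [h1, Matrix.mul_smul, Matrix.smul_mul, mul_one, hU1]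
  have hN : (NormedSpace.exp ((-t) • L)
      - Real.exp (-(t * lmax)) • (1 : Matrix V V ℝ)).PosSemidef := by
    rw [hexp, hone, ← Matrix.sub_mul, ← Matrix.mul_sub]
    have hds : Matrix.diagonal (fun i => Real.exp (-t * μ i))
        - Matrix.diagonal (fun _ : V => Real.exp (-(t * lmax)))
        = Matrix.diagonal (fun i => Real.exp (-t * μ i) - Real.exp (-(t * lmax))) := by
      ext i j
      by_cases h : i = j <;> simp [Matrix.diagonal, h]
    rw [hds]
    have hd : (Matrix.diagonal
        (fun i => Real.exp (-t * μ i) - Real.exp (-(t * lmax)))).PosSemidef := by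
      refine Matrix.PosSemidef.diagonal (fun i => ?_)
      have : -(t * lmax) ≤ -t * μ i := by nlinarith [hev i]
      simp only [Pi.zero_apply, sub_nonneg]
      exact Real.exp_le_exp.mpr this
    have := hd.mul_mul_conjTranspose_same U
    rwa [← Matrix.star_eq_conjTranspose] at this
  -- quadratic form bound for 1 - exp(-tL)
  have hq : x ⬝ᵥ (1 - NormedSpace.exp ((-t) • L)) *ᵥ x
      ≤ (1 - Real.exp (-(t * lmax))) * (x ⬝ᵥ x) := by
    have h0 := hN.dotProduct_mulVec_nonneg x
    have hsx : star x = x := by ext i; simp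
    rw [hsx, Matrix.sub_mulVec, Matrix.smul_mulVec, Matrix.one_mulVec,
      dotProduct_sub, dotProduct_smul] at h0
    rw [Matrix.sub_mulVec, Matrix.one_mulVec, dotProduct_sub]
    have : Real.exp (-(t * lmax)) • (x ⬝ᵥ x) = Real.exp (-(t * lmax)) * (x ⬝ᵥ x) := rfl
    rw [this] at h0
    ring_nf
    ring_nf at h0
    linarith
  -- rewrite LHS
  have hST : Sᵀ = S := by
    rw [← Matrix.conjTranspose_eq_transpose_of_trivial]
    exact hS.1
  have hLHS : ∑ i, (S.mulVec x i) ^ 2 = x ⬝ᵥ (S * S) *ᵥ x := by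
    rw [← Matrix.mulVec_mulVec, Matrix.dotProduct_mulVec]
    rw [show x ᵥ* S = S *ᵥ x by rw [← hST, Matrix.vecMul_transpose, hST]]
    simp [dotProduct, sq]
  have hRHS : (x ⬝ᵥ x) = ∑ i, (x i) ^ 2 := by simp [dotProduct, sq]
  rw [hLHS, hSsq, ← hRHS]
  exact hq

/-- geometric decay of the scattering layers:
`‖g_k‖ ≤ (1-e^{-tλmax})^{(k-1)/2} ‖S_t|g_0|‖ ≤ (1-e^{-tλmax})^{k/2} ‖f‖`. -/
theorem stmt_8 (E : Finset (V × V)) (w a : V × V → ℝ)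
    (hconn : WeaklyConnected E) (hw : ∀ e ∈ E, 0 < w e)
    (t : ℝ) (ht : 0 < t) (lmax : ℝ)
    (hlmax : IsGreatest {μ : ℝ | ∃ f : V → ℝ, f ≠ 0 ∧
      (Lap E w a).mulVec f = μ • f} lmax)
    (S : Matrix V V ℝ) (hS : S.PosSemidef)
    (hSsq : S * S = 1 - NormedSpace.exp ((-t) • Lap E w a))
    (f : V → ℝ) (g : ℕ → V → ℝ) (hg0 : g 0 = f)
    (hg : ∀ k, g (k + 1) = S.mulVec (fun i => |g k i|))
    (k : ℕ) (hk : 1 ≤ k) :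
    Real.sqrt (∑ i, (g k i) ^ 2) ≤
      (1 - Real.exp (-(t * lmax))) ^ (((k : ℝ) - 1) / 2) *
        Real.sqrt (∑ i, (S.mulVec (fun j => |f j|) i) ^ 2) ∧
    (1 - Real.exp (-(t * lmax))) ^ (((k : ℝ) - 1) / 2) *
        Real.sqrt (∑ i, (S.mulVec (fun j => |f j|) i) ^ 2) ≤
      (1 - Real.exp (-(t * lmax))) ^ ((k : ℝ) / 2) * Real.sqrt (∑ i, (f i) ^ 2) := by
  classical
  set c : ℝ := 1 - Real.exp (-(t * lmax)) with hcdef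
  -- lmax ≥ 0
  have hlm0 : 0 ≤ lmax := by
    obtain ⟨f0, hf0, heig⟩ := hlmax.1
    have hP := (Lap_posSemidef E w a hw).dotProduct_mulVec_nonneg f0
    have hsx : star f0 = f0 := by ext i; simp
    rw [hsx, heig, dotProduct_smul] at hP
    have hpos : 0 < f0 ⬝ᵥ f0 := by
      rcases Function.ne_iff.mp hf0 with ⟨i, hi⟩
      have h1 : 0 < f0 i * f0 i := mul_self_pos.mpr hi
      have h2 : ∀ j ∈ Finset.univ, 0 ≤ f0 j * f0 j := fun j _ => mul_self_nonneg _
      exact Finset.sum_pos' h2 ⟨i, Finset.mem_univ i, h1⟩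
    have hP' : 0 ≤ lmax * (f0 ⬝ᵥ f0) := hP
    nlinarith
  have hc : 0 ≤ c := by
    have h1 : Real.exp (-(t * lmax)) ≤ 1 :=
      Real.exp_le_one_iff.mpr (neg_nonpos.mpr (mul_nonneg ht.le hlm0))
    rw [hcdef]; linarith
  -- norm bound for S
  have normS : ∀ x : V → ℝ, Real.sqrt (∑ i, (S.mulVec x i) ^ 2)
      ≤ Real.sqrt c * Real.sqrt (∑ i, (x i) ^ 2) := by
    intro x
    have h := key_bound E w a hw t ht lmax hlmax S hS hSsq x
    calc Real.sqrt (∑ i, (S.mulVec x i) ^ 2)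
        ≤ Real.sqrt (c * ∑ i, (x i) ^ 2) := Real.sqrt_le_sqrt h
      _ = Real.sqrt c * Real.sqrt (∑ i, (x i) ^ 2) := Real.sqrt_mul hc _
  have habs : ∀ x : V → ℝ, ∑ i, |x i| ^ 2 = ∑ i, (x i) ^ 2 := by
    intro x; exact Finset.sum_congr rfl (fun i _ => sq_abs _)
  set A : ℝ := Real.sqrt (∑ i, (S.mulVec (fun j => |f j|) i) ^ 2) with hAdef
  have hA0 : 0 ≤ A := Real.sqrt_nonneg _
  have hsqrtc : Real.sqrt c = c ^ ((1 : ℝ) / 2) := Real.sqrt_eq_rpow c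
  -- first inequality by induction
  have claim : ∀ n : ℕ, 1 ≤ n → Real.sqrt (∑ i, (g n i) ^ 2)
      ≤ c ^ (((n : ℝ) - 1) / 2) * A := by
    intro n hn
    induction n, hn using Nat.le_induction with
    | base =>
      rw [hg 0, hg0]
      have : (((1 : ℕ) : ℝ) - 1) / 2 = 0 := by norm_num
      rw [this, Real.rpow_zero, one_mul]
    | succ n hn ih =>
      have hne : (1 : ℝ) / 2 + ((n : ℝ) - 1) / 2 ≠ 0 := by
        have : (1 : ℝ) ≤ (n : ℝ) := by exact_mod_cast hn
        intro h; nlinarith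
      calc Real.sqrt (∑ i, (g (n + 1) i) ^ 2)
          = Real.sqrt (∑ i, (S.mulVec (fun i => |g n i|) i) ^ 2) := by rw [hg n]
        _ ≤ Real.sqrt c * Real.sqrt (∑ i, |g n i| ^ 2) := normS _
        _ = Real.sqrt c * Real.sqrt (∑ i, (g n i) ^ 2) := by rw [habs]
        _ ≤ Real.sqrt c * (c ^ (((n : ℝ) - 1) / 2) * A) :=
            mul_le_mul_of_nonneg_left ih (Real.sqrt_nonneg _)
        _ = (c ^ ((1 : ℝ) / 2) * c ^ (((n : ℝ) - 1) / 2)) * A := by rw [hsqrtc]; ring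
        _ = c ^ ((1 : ℝ) / 2 + ((n : ℝ) - 1) / 2) * A := by
            rw [Real.rpow_add' hc hne]
        _ = c ^ (((↑(n + 1) : ℝ) - 1) / 2) * A := by
            congr 1; push_cast; ring
  refine ⟨claim k hk, ?_⟩
  -- second inequality
  have hAF : A ≤ Real.sqrt c * Real.sqrt (∑ i, (f i) ^ 2) := by
    rw [hAdef]
    calc Real.sqrt (∑ i, (S.mulVec (fun j => |f j|) i) ^ 2)
        ≤ Real.sqrt c * Real.sqrt (∑ i, |f i| ^ 2) := normS _
      _ = Real.sqrt c * Real.sqrt (∑ i, (f i) ^ 2) := by rw [habs]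
  have hne : ((k : ℝ) - 1) / 2 + (1 : ℝ) / 2 ≠ 0 := by
    have : (1 : ℝ) ≤ (k : ℝ) := by exact_mod_cast hk
    intro h; nlinarith
  calc c ^ (((k : ℝ) - 1) / 2) * A
      ≤ c ^ (((k : ℝ) - 1) / 2) * (Real.sqrt c * Real.sqrt (∑ i, (f i) ^ 2)) :=
        mul_le_mul_of_nonneg_left hAF (Real.rpow_nonneg hc _)
    _ = (c ^ (((k : ℝ) - 1) / 2) * c ^ ((1 : ℝ) / 2)) * Real.sqrt (∑ i, (f i) ^ 2) := by
        rw [hsqrtc]; ring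
    _ = c ^ (((k : ℝ) - 1) / 2 + (1 : ℝ) / 2) * Real.sqrt (∑ i, (f i) ^ 2) := by
        rw [Real.rpow_add' hc hne]
    _ = c ^ ((k : ℝ) / 2) * Real.sqrt (∑ i, (f i) ^ 2) := by congr 1; ring
end

section
/- With the scattering sequence g_0 = f, f_{k+1} = T_t |g_k|, g_{k+1} = S_t |g_k| as above on a finite weakly connected directed graph, one has ‖f‖² = Σ_{k=1}^∞ ‖f_k‖², and the terms ‖g_k‖² are dominated by a geometric series with ratio (1 − e^{−tλ_max}). -/
open Matrix Real MeasureTheory ProbabilityTheory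

variable {V : Type*} [Fintype V] [DecidableEq V]

lemma exp_smul_spectral (L : Matrix V V ℝ) (hL : L.IsHermitian) (s : ℝ) :
    NormedSpace.exp (s • L) =
      (hL.eigenvectorUnitary : Matrix V V ℝ) *
        Matrix.diagonal (fun i => Real.exp (s * hL.eigenvalues i)) *
        star (hL.eigenvectorUnitary : Matrix V V ℝ) := by
  set U : Matrix V V ℝ := (hL.eigenvectorUnitary : Matrix V V ℝ) with hUdef
  have h1U : star U * U = 1 := Matrix.mem_unitaryGroup_iff'.mp hL.eigenvectorUnitary.2
  have hU1 : U * star U = 1 := Matrix.mem_unitaryGroup_iff.mp hL.eigenvectorUnitary.2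
  have hinv : U⁻¹ = star U := Matrix.inv_eq_left_inv h1U
  have hunit : IsUnit U := ⟨Unitary.toUnits hL.eigenvectorUnitary, rfl⟩
  have hdiag : Matrix.diagonal (fun i => s * hL.eigenvalues i)
      = s • Matrix.diagonal (RCLike.ofReal ∘ hL.eigenvalues : V → ℝ) := by
    rw [← Matrix.diagonal_smul]
    congr 1
  have h1 : s • L = U * Matrix.diagonal (fun i => s * hL.eigenvalues i) * U⁻¹ := by
    rw [hinv, hdiag, mul_smul_comm, smul_mul_assoc, ← Unitary.conjStarAlgAut_apply (S := ℝ), ← hL.spectral_theorem]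
  rw [h1, Matrix.exp_conj U _ hunit, Matrix.exp_diagonal, hinv]
  congr 2
  funext i
  simp [Pi.exp_def, Real.exp_eq_exp_ℝ]

lemma quad_exp_eq (L : Matrix V V ℝ) (hL : L.IsHermitian) (s : ℝ) (h : V → ℝ) :
    h ⬝ᵥ (NormedSpace.exp (s • L)) *ᵥ h =
      ∑ i, Real.exp (s * hL.eigenvalues i) *
        ((star (hL.eigenvectorUnitary : Matrix V V ℝ) *ᵥ h) i) ^ 2 := by
  set U : Matrix V V ℝ := (hL.eigenvectorUnitary : Matrix V V ℝ) with hUdef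
  set y : V → ℝ := star U *ᵥ h with hy
  have hyt : y = Uᵀ *ᵥ h := by
    rw [hy, Matrix.star_eq_conjTranspose, Matrix.conjTranspose_eq_transpose_of_trivial]
  rw [exp_smul_spectral L hL s, ← Matrix.mulVec_mulVec, ← Matrix.mulVec_mulVec,
    Matrix.dotProduct_mulVec, ← Matrix.mulVec_transpose, ← hyt, ← hy]
  simp only [dotProduct, Matrix.mulVec_diagonal]
  refine Finset.sum_congr rfl fun i _ => by ring

lemma sum_sq_mulVec_star (L : Matrix V V ℝ) (hL : L.IsHermitian) (h : V → ℝ) :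
    ∑ i, ((star (hL.eigenvectorUnitary : Matrix V V ℝ) *ᵥ h) i) ^ 2 = ∑ i, h i ^ 2 := by
  set U : Matrix V V ℝ := (hL.eigenvectorUnitary : Matrix V V ℝ) with hUdef
  set y : V → ℝ := star U *ᵥ h with hy
  have hyt : y = Uᵀ *ᵥ h := by
    rw [hy, Matrix.star_eq_conjTranspose, Matrix.conjTranspose_eq_transpose_of_trivial]
  have hU1 : U * star U = 1 := Matrix.mem_unitaryGroup_iff.mp hL.eigenvectorUnitary.2
  have h2 : ∑ i, y i ^ 2 = y ⬝ᵥ y := by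
    simp [dotProduct, sq]
  have hst : star U = Uᵀ := by
    rw [Matrix.star_eq_conjTranspose, Matrix.conjTranspose_eq_transpose_of_trivial]
  have hUU : U * Uᵀ = 1 := by rw [← hst]; exact hU1
  have h3 : y ⬝ᵥ y = h ⬝ᵥ h := by
    rw [hyt, Matrix.mulVec_transpose, ← Matrix.dotProduct_mulVec, ← Matrix.mulVec_transpose,
      Matrix.mulVec_mulVec, hUU, Matrix.one_mulVec]
  rw [h2, h3]
  simp [dotProduct, sq]

lemma sq_mulVec (M : Matrix V V ℝ) (hM : Mᵀ = M) (x : V → ℝ) :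
    ∑ i, (M *ᵥ x) i ^ 2 = x ⬝ᵥ ((M * M) *ᵥ x) := by
  have h1 : ∑ i, (M *ᵥ x) i ^ 2 = (M *ᵥ x) ⬝ᵥ (M *ᵥ x) := by
    simp [dotProduct, sq]
  rw [h1, Matrix.dotProduct_mulVec, ← Matrix.mulVec_transpose, hM, Matrix.mulVec_mulVec,
    dotProduct_comm]

/-- energy identity `‖f‖² = Σ_{k≥1} ‖f_k‖²` and geometric domination of the
terms `‖g_k‖²` with ratio `1 - e^{-tλmax}`. -/
theorem stmt_9 (E : Finset (V × V)) (w a : V × V → ℝ)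
    (hconn : WeaklyConnected E) (hw : ∀ e ∈ E, 0 < w e)
    (t : ℝ) (ht : 0 < t) (lmax : ℝ)
    (hlmax : IsGreatest {μ : ℝ | ∃ f : V → ℝ, f ≠ 0 ∧
      (Lap E w a).mulVec f = μ • f} lmax)
    (S : Matrix V V ℝ) (hS : S.PosSemidef)
    (hSsq : S * S = 1 - NormedSpace.exp ((-t) • Lap E w a))
    (f : V → ℝ) (g fs : ℕ → V → ℝ) (hg0 : g 0 = f)
    (hg : ∀ k, g (k + 1) = S.mulVec (fun i => |g k i|))
    (hfs : ∀ k, fs (k + 1) =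
      (NormedSpace.exp ((-(t / 2)) • Lap E w a)).mulVec (fun i => |g k i|)) :
    (∑' k : ℕ, ∑ i, (fs (k + 1) i) ^ 2) = ∑ i, (f i) ^ 2 ∧
    ∃ C : ℝ, ∀ k : ℕ, 1 ≤ k →
      (∑ i, (g k i) ^ 2) ≤ C * (1 - Real.exp (-(t * lmax))) ^ k := by
  classical
  set L : Matrix V V ℝ := Lap E w a with hLdef
  have hLpsd : L.PosSemidef := by
    have hd : (Matrix.diagonal (fun e : E => w e)).PosSemidef :=
      Matrix.posSemidef_diagonal_iff.mpr (fun e => (hw e e.2).le)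
    have h2 := hd.conjTranspose_mul_mul_same (Dmat E a)
    rwa [hLdef, Lap, ← Matrix.conjTranspose_eq_transpose_of_trivial]
  have hL : L.IsHermitian := hLpsd.1
  have hLt : Lᵀ = L := by
    rw [← Matrix.conjTranspose_eq_transpose_of_trivial]; exact hL
  -- eigenvalues bounded by lmax
  have heig : ∀ i, hL.eigenvalues i ≤ lmax := by
    intro i
    refine hlmax.2 ⟨⇑(hL.eigenvectorBasis i), ?_, hL.mulVec_eigenvectorBasis i⟩
    intro hc
    exact hL.eigenvectorBasis.orthonormal.ne_zero i (by ext j; exact congrFun hc j)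
  -- lmax nonnegative
  have hlm : 0 ≤ lmax := by
    obtain ⟨v, hv0, hveq⟩ := hlmax.1
    have hvv : 0 < v ⬝ᵥ v := by
      obtain ⟨j, hj⟩ := Function.ne_iff.mp hv0
      exact Finset.sum_pos' (fun i _ => mul_self_nonneg _)
        ⟨j, Finset.mem_univ j, mul_self_pos.mpr hj⟩
    have hge := (Matrix.posSemidef_iff_dotProduct_mulVec.mp hLpsd).2 v
    rw [hveq] at hge
    simp only [star_trivial, dotProduct_smul, smul_eq_mul] at hge
    nlinarith
  set c : ℝ := Real.exp (-(t * lmax)) with hc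
  set r : ℝ := 1 - c with hrdef
  have hr0 : 0 ≤ r := by
    have : c ≤ 1 := Real.exp_le_one_iff.mpr (by nlinarith)
    simp [hrdef]; linarith
  have hr1 : r < 1 := by
    have : 0 < c := Real.exp_pos _
    simp [hrdef]; linarith
  set Et : Matrix V V ℝ := NormedSpace.exp ((-t) • L) with hEt
  set T : Matrix V V ℝ := NormedSpace.exp ((-(t / 2)) • L) with hT
  have hTT : Et = T * T := by
    have hsum : ((-(t / 2)) • L) + ((-(t / 2)) • L) = (-t) • L := by
      rw [← add_smul]; congr 1; ring
    rw [hEt, ← hsum]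
    exact Matrix.exp_add_of_commute _ _ (Commute.refl _)
  have hTsym : Tᵀ = T := by
    rw [hT, ← Matrix.exp_transpose, Matrix.transpose_smul, hLt]
  have hSsym : Sᵀ = S := by
    rw [← Matrix.conjTranspose_eq_transpose_of_trivial]; exact hS.1
  set b : ℕ → ℝ := fun k => ∑ i, g k i ^ 2 with hb
  have hbnn : ∀ k, 0 ≤ b k := fun k => Finset.sum_nonneg fun i _ => sq_nonneg _
  -- per step analysis
  have hstep : ∀ k, (∑ i, fs (k + 1) i ^ 2) = b k - b (k + 1) ∧ b (k + 1) ≤ r * b k := by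
    intro k
    set x : V → ℝ := fun i => |g k i| with hx
    have hxx : x ⬝ᵥ x = b k := by
      simp [hx, hb, dotProduct, abs_mul_abs_self, sq]
    have hQ : ∑ i, fs (k + 1) i ^ 2 = x ⬝ᵥ (Et *ᵥ x) := by
      rw [hfs k, sq_mulVec T hTsym, ← hTT]
    have hbsucc : b (k + 1) = b k - x ⬝ᵥ (Et *ᵥ x) := by
      have : b (k + 1) = ∑ i, (S *ᵥ x) i ^ 2 := by
        simp only [hb, hg k, hx]
      rw [this, sq_mulVec S hSsym x, hSsq, Matrix.sub_mulVec, Matrix.one_mulVec,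
        dotProduct_sub, hxx]
    have hQlow : c * b k ≤ x ⬝ᵥ (Et *ᵥ x) := by
      have h1 : x ⬝ᵥ (Et *ᵥ x) = ∑ i, Real.exp ((-t) * hL.eigenvalues i) *
          ((star (hL.eigenvectorUnitary : Matrix V V ℝ) *ᵥ x) i) ^ 2 :=
        quad_exp_eq L hL (-t) x
      have h2 : ∑ i, c * ((star (hL.eigenvectorUnitary : Matrix V V ℝ) *ᵥ x) i) ^ 2
          ≤ ∑ i, Real.exp ((-t) * hL.eigenvalues i) *
            ((star (hL.eigenvectorUnitary : Matrix V V ℝ) *ᵥ x) i) ^ 2 := by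
        refine Finset.sum_le_sum fun i _ => ?_
        refine mul_le_mul_of_nonneg_right ?_ (sq_nonneg _)
        rw [hc]
        refine Real.exp_le_exp.mpr ?_
        have := heig i
        nlinarith
      have h3 : ∑ i, c * ((star (hL.eigenvectorUnitary : Matrix V V ℝ) *ᵥ x) i) ^ 2
          = c * b k := by
        rw [← Finset.mul_sum, sum_sq_mulVec_star L hL x]
        congr 1
        simp [hx, hb, sq_abs]
      rw [h1, ← h3]
      exact h2
    constructor
    · rw [hQ, hbsucc]; ring
    · rw [hbsucc, hrdef]
      nlinarith [hQlow]
  -- geometric decay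
  have hgeo : ∀ k, b k ≤ b 0 * r ^ k := by
    intro k
    induction k with
    | zero => simp
    | succ n ih =>
      calc b (n + 1) ≤ r * b n := (hstep n).2
        _ ≤ r * (b 0 * r ^ n) := by nlinarith
        _ = b 0 * r ^ (n + 1) := by ring
  have hbtend : Filter.Tendsto b Filter.atTop (nhds 0) := by
    have h1 : Filter.Tendsto (fun n : ℕ => b 0 * r ^ n) Filter.atTop (nhds 0) := by
      have := (tendsto_pow_atTop_nhds_zero_of_lt_one hr0 hr1).const_mul (b 0)
      simpa using this
    exact squeeze_zero hbnn hgeo h1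
  have hsum : HasSum (fun k => ∑ i, fs (k + 1) i ^ 2) (b 0) := by
    rw [hasSum_iff_tendsto_nat_of_nonneg
      (fun k => Finset.sum_nonneg fun i _ => sq_nonneg _)]
    have hps : ∀ n, ∑ k ∈ Finset.range n, (∑ i, fs (k + 1) i ^ 2) = b 0 - b n := by
      intro n
      rw [Finset.sum_congr rfl (fun k _ => (hstep k).1)]
      exact Finset.sum_range_sub' b n
    simp only [hps]
    simpa using Filter.Tendsto.sub (tendsto_const_nhds (x := b 0)) hbtend
  have hb0 : b 0 = ∑ i, f i ^ 2 := by simp [hb, hg0]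
  constructor
  · rw [hsum.tsum_eq, hb0]
  · refine ⟨∑ i, f i ^ 2, fun k _ => ?_⟩
    calc (∑ i, g k i ^ 2) = b k := rfl
      _ ≤ b 0 * r ^ k := hgeo k
      _ = (∑ i, f i ^ 2) * (1 - Real.exp (-(t * lmax))) ^ k := by rw [hb0, hrdef, hc]
end

section
/- Suppose additionally a is a gradient field with potential φ, and f = c e^{φ} + h for some c ∈ ℝ and h ∈ ℓ²(V). Then for each k ≥ 1, ‖g_k‖ ≤ √t (1 − e^{−tλ_max})^{(k−1)/2} ‖M_{√w} D_a h‖. -/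
open Matrix Real MeasureTheory ProbabilityTheory

variable {V : Type*} [Fintype V] [DecidableEq V]

/-! ### Auxiliary lemmas -/

lemma conj_quad (U : Matrix V V ℝ) (d x : V → ℝ) :
    x ⬝ᵥ (U * diagonal d * star U) *ᵥ x = ∑ i, d i * ((star U *ᵥ x) i)^2 := by
  rw [← mulVec_mulVec, ← mulVec_mulVec]
  rw [show (star U : Matrix V V ℝ) = Uᵀ by simp [star, conjTranspose]]
  rw [show x ⬝ᵥ U *ᵥ (diagonal d *ᵥ (Uᵀ *ᵥ x)) = (Uᵀ *ᵥ x) ⬝ᵥ (diagonal d *ᵥ (Uᵀ *ᵥ x)) from ?_]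
  · simp [mulVec_diagonal, dotProduct, mul_comm, sq, mul_assoc, mul_left_comm]
  · rw [dotProduct_mulVec, ← mulVec_transpose]

lemma Dmat_mulVec (E : Finset (V × V)) (a : V × V → ℝ) (x : V → ℝ) (e : E) :
    (Dmat E a *ᵥ x) e = x (e : V × V).2 - Real.exp (a e) * x (e : V × V).1 := by
  simp [Dmat, mulVec, dotProduct, sub_mul, Finset.sum_sub_distrib, mul_assoc]

lemma lap_quad (E : Finset (V × V)) (w a : V × V → ℝ) (x : V → ℝ) :
    x ⬝ᵥ (Lap E w a) *ᵥ x = ∑ e : E, w e * ((Dmat E a *ᵥ x) e)^2 := by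
  rw [Lap, ← mulVec_mulVec, ← mulVec_mulVec]
  rw [show x ⬝ᵥ (Dmat E a)ᵀ *ᵥ (diagonal _ *ᵥ (Dmat E a *ᵥ x))
      = (Dmat E a *ᵥ x) ⬝ᵥ (diagonal (fun e : E => w e) *ᵥ (Dmat E a *ᵥ x)) from ?_]
  · simp [mulVec_diagonal, dotProduct, mul_comm, sq, mul_assoc, mul_left_comm]
  · rw [dotProduct_mulVec, ← mulVec_transpose, transpose_transpose]

lemma lap_posSemidef (E : Finset (V × V)) (w a : V × V → ℝ) (hw : ∀ e ∈ E, 0 ≤ w e) :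
    (Lap E w a).PosSemidef := by
  have hW : (Matrix.diagonal (fun e : E => w e)).PosSemidef :=
    Matrix.posSemidef_diagonal_iff.2 fun e => hw e e.2
  have := hW.conjTranspose_mul_mul_same (Dmat E a)
  simpa [Lap, conjTranspose, star] using this

lemma one_sub_exp_decomp (A : Matrix V V ℝ) (hA : A.IsHermitian) (t : ℝ) :
    1 - NormedSpace.exp ((-t) • A) =
      (Matrix.IsHermitian.eigenvectorUnitary hA : Matrix V V ℝ) *
        diagonal (fun i => 1 - Real.exp (-t * hA.eigenvalues i)) *
        star (Matrix.IsHermitian.eigenvectorUnitary hA : Matrix V V ℝ) := by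
  set U : Matrix V V ℝ := (Matrix.IsHermitian.eigenvectorUnitary hA : Matrix V V ℝ) with hU
  have hUU : U * star U = 1 :=
    Matrix.mem_unitaryGroup_iff.mp (Matrix.IsHermitian.eigenvectorUnitary hA).2
  have hUU' : star U * U = 1 :=
    Matrix.mem_unitaryGroup_iff'.mp (Matrix.IsHermitian.eigenvectorUnitary hA).2
  have hUunit : IsUnit U := ⟨⟨U, star U, hUU, hUU'⟩, rfl⟩
  have hUinv : U⁻¹ = star U := Matrix.inv_eq_left_inv hUU'
  have hspec : A = U * diagonal hA.eigenvalues * star U := by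
    have := Matrix.IsHermitian.spectral_theorem hA
    simpa using this
  have hsmul : U * diagonal (fun i => -t * hA.eigenvalues i) * U⁻¹ = (-t) • A := by
    rw [hUinv]
    rw [show diagonal (fun i => -t * hA.eigenvalues i) = (-t) • diagonal hA.eigenvalues by
      rw [← Matrix.diagonal_smul]; rfl]
    rw [Matrix.mul_smul, Matrix.smul_mul, ← hspec]
  rw [← hsmul, Matrix.exp_conj _ _ hUunit, Matrix.exp_diagonal, hUinv]
  have hexp : NormedSpace.exp (fun i => -t * hA.eigenvalues i) =
      fun i => Real.exp (-t * hA.eigenvalues i) := by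
    rw [Pi.exp_def]
    funext i
    rw [Real.exp_eq_exp_ℝ]
  rw [hexp]
  have h1 : (1 : Matrix V V ℝ) = U * diagonal (fun _ : V => (1:ℝ)) * star U := by
    rw [Matrix.diagonal_one, Matrix.mul_one, hUU]
  conv_lhs => rw [h1]
  rw [← Matrix.sub_mul, ← Matrix.mul_sub, Matrix.diagonal_sub]

/-- if `a` is a gradient field with potential `φ` and `f = c e^{φ} + h`, then
`‖g_k‖ ≤ √t (1-e^{-tλmax})^{(k-1)/2} ‖M_{√w} D_a h‖`. -/
theorem stmt_12 (E : Finset (V × V)) (w a : V × V → ℝ) (φ : V → ℝ)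
    (hconn : WeaklyConnected E) (hw : ∀ e ∈ E, 0 < w e)
    (hgrad : ∀ e ∈ E, a e = φ e.2 - φ e.1)
    (t : ℝ) (ht : 0 < t) (lmax : ℝ)
    (hlmax : IsGreatest {μ : ℝ | ∃ f : V → ℝ, f ≠ 0 ∧
      (Lap E w a).mulVec f = μ • f} lmax)
    (S : Matrix V V ℝ) (hS : S.PosSemidef)
    (hSsq : S * S = 1 - NormedSpace.exp ((-t) • Lap E w a))
    (c : ℝ) (h f : V → ℝ) (hf : f = fun i => c * Real.exp (φ i) + h i)
    (g : ℕ → V → ℝ) (hg0 : g 0 = f)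
    (hg : ∀ k, g (k + 1) = S.mulVec (fun i => |g k i|))
    (k : ℕ) (hk : 1 ≤ k) :
    Real.sqrt (∑ i, (g k i) ^ 2) ≤
      Real.sqrt t * (1 - Real.exp (-(t * lmax))) ^ (((k : ℝ) - 1) / 2) *
        Real.sqrt (∑ e : E, w e * ((Dmat E a).mulVec h e) ^ 2) := by
  have hPSD : (Lap E w a).PosSemidef := lap_posSemidef E w a (fun e he => (hw e he).le)
  have hA : (Lap E w a).IsHermitian := hPSD.1
  set U : Matrix V V ℝ := (Matrix.IsHermitian.eigenvectorUnitary hA : Matrix V V ℝ) with hU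
  set μ : V → ℝ := hA.eigenvalues with hμ
  have hμ0 : ∀ i, 0 ≤ μ i := fun i => hPSD.eigenvalues_nonneg i
  have hμmax : ∀ i, μ i ≤ lmax := by
    intro i
    apply hlmax.2
    refine ⟨(hA.eigenvectorBasis i : V → ℝ), ?_, hA.mulVec_eigenvectorBasis i⟩
    intro hzero
    exact hA.eigenvectorBasis.orthonormal.ne_zero i (by ext j; exact congrFun hzero j)
  have hlmax0 : 0 ≤ lmax := by
    obtain ⟨f0, hf0, heig⟩ := hlmax.1
    obtain ⟨i, hi⟩ := Function.ne_iff.1 hf0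
    have hq : 0 ≤ f0 ⬝ᵥ (Lap E w a) *ᵥ f0 := by
      have := hPSD.dotProduct_mulVec_nonneg f0
      simpa using this
    have hq' : f0 ⬝ᵥ (Lap E w a) *ᵥ f0 = lmax * (∑ j, f0 j ^ 2) := by
      rw [heig]
      simp [dotProduct, Finset.mul_sum, sq, mul_comm, mul_left_comm]
    have hpos : 0 < ∑ j, f0 j ^ 2 :=
      Finset.sum_pos' (fun j _ => sq_nonneg _)
        ⟨i, Finset.mem_univ i, by
          have := abs_pos.2 hi
          nlinarith [sq_abs (f0 i)]⟩
    nlinarith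
  set β : ℝ := 1 - Real.exp (-(t * lmax)) with hβ
  have hβ0 : 0 ≤ β := by
    have h1 : 0 ≤ t * lmax := mul_nonneg ht.le hlmax0
    have h2 : Real.exp (-(t * lmax)) ≤ 1 := Real.exp_le_one_iff.2 (by linarith)
    rw [hβ]; linarith
  -- the quadratic form of S*S
  have hquad : ∀ x : V → ℝ, ∑ i, (S *ᵥ x) i ^ 2 =
      ∑ i, (1 - Real.exp (-t * μ i)) * ((star U *ᵥ x) i)^2 := by
    intro x
    have h1 : ∑ i, (S *ᵥ x) i ^ 2 = (S *ᵥ x) ⬝ᵥ (S *ᵥ x) := by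
      simp [dotProduct, sq]
    have hStrans : Sᵀ = S := by
      have := hS.1
      exact (by simpa [conjTranspose, star] using this : S.IsSymm)
    have h2 : x ⬝ᵥ (S * S) *ᵥ x = (S *ᵥ x) ⬝ᵥ (S *ᵥ x) := by
      rw [← mulVec_mulVec, dotProduct_mulVec, ← mulVec_transpose, hStrans]
    rw [h1, ← h2, hSsq, one_sub_exp_decomp (Lap E w a) hA t, conj_quad]
  -- the quadratic form of A
  have hquadA : ∀ x : V → ℝ, ∑ e : E, w e * ((Dmat E a *ᵥ x) e)^2 =
      ∑ i, μ i * ((star U *ᵥ x) i)^2 := by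
    intro x
    have hspec : Lap E w a = U * diagonal μ * star U := by
      have := Matrix.IsHermitian.spectral_theorem hA
      simpa using this
    rw [← lap_quad E w a x]
    conv_lhs => rw [hspec]
    rw [conj_quad]
  -- norm preservation by star U
  have hiso : ∀ x : V → ℝ, ∑ i, ((star U *ᵥ x) i)^2 = ∑ i, x i ^ 2 := by
    intro x
    have hUU : U * star U = 1 :=
      Matrix.mem_unitaryGroup_iff.mp (Matrix.IsHermitian.eigenvectorUnitary hA).2
    have := conj_quad U (fun _ : V => (1:ℝ)) x
    rw [Matrix.diagonal_one, Matrix.mul_one, hUU] at this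
    simpa [dotProduct, sq] using this.symm
  -- bound 1: contraction by β
  have bound_b : ∀ x : V → ℝ, ∑ i, (S *ᵥ x) i ^ 2 ≤ β * ∑ i, x i ^ 2 := by
    intro x
    rw [hquad x, ← hiso x, Finset.mul_sum]
    apply Finset.sum_le_sum
    intro i _
    have hc : 1 - Real.exp (-t * μ i) ≤ β := by
      have : Real.exp (-(t * lmax)) ≤ Real.exp (-t * μ i) := by
        apply Real.exp_le_exp.2
        nlinarith [hμmax i]
      simp only [hβ]; linarith
    have := sq_nonneg ((star U *ᵥ x) i)
    nlinarith
  -- bound 2: initial step, by t * quadratic form of A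
  have bound_t : ∀ x : V → ℝ,
      ∑ i, (S *ᵥ x) i ^ 2 ≤ t * ∑ e : E, w e * ((Dmat E a *ᵥ x) e)^2 := by
    intro x
    rw [hquad x, hquadA x, Finset.mul_sum]
    apply Finset.sum_le_sum
    intro i _
    have hc : 1 - Real.exp (-t * μ i) ≤ t * μ i := by
      have := Real.add_one_le_exp (-t * μ i)
      nlinarith
    have := sq_nonneg ((star U *ᵥ x) i)
    nlinarith
  -- D_a f = D_a h
  have hDfh : ∀ e : E, (Dmat E a *ᵥ f) e = (Dmat E a *ᵥ h) e := by
    intro e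
    rw [Dmat_mulVec, Dmat_mulVec, hf, hgrad e e.2, Real.exp_sub]
    have h1 : Real.exp (φ (e : V × V).1) ≠ 0 := Real.exp_ne_zero _
    field_simp
    ring
  -- |D_a |x|| ≤ |D_a x| pointwise
  have habs : ∀ (x : V → ℝ) (e : E),
      ((Dmat E a *ᵥ fun i => |x i|) e)^2 ≤ ((Dmat E a *ᵥ x) e)^2 := by
    intro x e
    rw [Dmat_mulVec, Dmat_mulVec]
    have key : abs (|x (e : V × V).2| - Real.exp (a e) * |x (e : V × V).1|)
        ≤ abs (x (e : V × V).2 - Real.exp (a e) * x (e : V × V).1) := by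
      have := abs_abs_sub_abs_le_abs_sub (x (e : V × V).2)
        (Real.exp (a e) * x (e : V × V).1)
      rwa [abs_mul, Real.abs_exp] at this
    have h2 := pow_le_pow_left₀ (abs_nonneg _) key 2
    rwa [sq_abs, sq_abs] at h2
  set Q : ℝ := ∑ e : E, w e * ((Dmat E a).mulVec h e) ^ 2 with hQ
  have hQ0 : 0 ≤ Q := Finset.sum_nonneg fun e _ =>
    mul_nonneg (hw e e.2).le (sq_nonneg _)
  -- main induction: for all m, N (g (m+1)) ≤ t * β^m * Q
  have main : ∀ m : ℕ, ∑ i, (g (m+1) i)^2 ≤ t * β ^ m * Q := by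
    intro m
    induction m with
    | zero =>
      rw [hg 0, hg0]
      calc ∑ i, (S *ᵥ fun i => |f i|) i ^ 2
          ≤ t * ∑ e : E, w e * ((Dmat E a *ᵥ fun i => |f i|) e)^2 := bound_t _
        _ ≤ t * ∑ e : E, w e * ((Dmat E a *ᵥ f) e)^2 := by
            apply mul_le_mul_of_nonneg_left _ ht.le
            exact Finset.sum_le_sum fun e _ =>
              mul_le_mul_of_nonneg_left (habs f e) (hw e e.2).le
        _ = t * β ^ 0 * Q := by
            rw [pow_zero, mul_one, hQ]
            congr 1
            exact Finset.sum_congr rfl fun e _ => by rw [hDfh e]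
    | succ m ih =>
      rw [hg (m+1)]
      calc ∑ i, (S *ᵥ fun i => |g (m+1) i|) i ^ 2
          ≤ β * ∑ i, |g (m+1) i| ^ 2 := bound_b _
        _ = β * ∑ i, (g (m+1) i) ^ 2 := by simp [sq_abs]
        _ ≤ β * (t * β ^ m * Q) := mul_le_mul_of_nonneg_left ih hβ0
        _ = t * β ^ (m+1) * Q := by ring
  -- conclude
  obtain ⟨m, rfl⟩ : ∃ m, k = m + 1 := ⟨k - 1, (Nat.succ_pred_eq_of_pos hk).symm⟩
  have hsq : Real.sqrt (∑ i, (g (m+1) i)^2) ≤ Real.sqrt (t * β ^ m * Q) :=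
    Real.sqrt_le_sqrt (main m)
  refine hsq.trans_eq ?_
  rw [Real.sqrt_mul (by positivity : (0:ℝ) ≤ t * β ^ m), Real.sqrt_mul ht.le]
  have hexp : (((m + 1 : ℕ) : ℝ) - 1) / 2 = (m : ℝ) * (1/2) := by push_cast; ring
  rw [hexp, Real.rpow_mul hβ0, Real.rpow_natCast, ← Real.sqrt_eq_rpow]
end
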